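/- For all integers m, n ≥ 0, gcd(122^m − 307^n, 3·5·11·13) > 1; indeed 3 divides 122^m − 307^n when m ≡ 0 (mod 2), 11 divides it when n ≡ 0 (mod 2), 5 divides it when m ≡ n (mod 4), and 13 divides it when m ≡ −n (mod 4). -/

import Mathlib

lemma pow_mod_helper {R : Type*} [Monoid R] (a : R) {k : ℕ} (h : a ^ k = 1) (m : ℕ) :
    a ^ m = a ^ (m % k) := by
  conv_lhs => rw [← Nat.div_add_mod m k]
  rw [pow_add, pow_mul, h, one_pow, one_mul]

lemma gcd_gt_one (p : ℕ) (hp : 1 < p) (a b : ℤ) (hb : b ≠ 0)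
    (h1 : (p : ℤ) ∣ a) (h2 : (p : ℤ) ∣ b) : 1 < Int.gcd a b := by
  have hd : (p : ℤ) ∣ (Int.gcd a b : ℤ) := Int.dvd_coe_gcd h1 h2
  have hd' : p ∣ Int.gcd a b := Int.ofNat_dvd.mp hd
  have hpos : 0 < Int.gcd a b := Int.gcd_pos_of_ne_zero_right a hb
  exact lt_of_lt_of_le hp (Nat.le_of_dvd hpos hd')

lemma div3 (m n : ℕ) (h : 2 ∣ m) : (3 : ℤ) ∣ (122 : ℤ) ^ m - (307 : ℤ) ^ n := by
  obtain ⟨k, rfl⟩ := h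
  have : (((122 : ℤ) ^ (2 * k) - (307 : ℤ) ^ n : ℤ) : ZMod 3) = 0 := by
    push_cast
    rw [pow_mul, show (122 : ZMod 3) ^ 2 = 1 by decide, one_pow,
      show (307 : ZMod 3) = 1 by decide, one_pow]
    ring
  exact (ZMod.intCast_zmod_eq_zero_iff_dvd _ 3).mp this

lemma div11 (m n : ℕ) (h : 2 ∣ n) : (11 : ℤ) ∣ (122 : ℤ) ^ m - (307 : ℤ) ^ n := by
  obtain ⟨k, rfl⟩ := h
  have : (((122 : ℤ) ^ m - (307 : ℤ) ^ (2 * k) : ℤ) : ZMod 11) = 0 := by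
    push_cast
    rw [pow_mul]
    have h1 : (122 : ZMod 11) = 1 := by decide
    have h2 : ((307 : ZMod 11) ^ 2) = 1 := by decide
    rw [h1, h2, one_pow, one_pow]
    ring
  exact (ZMod.intCast_zmod_eq_zero_iff_dvd _ 11).mp this

lemma div5 (m n : ℕ) (h : m ≡ n [MOD 4]) : (5 : ℤ) ∣ (122 : ℤ) ^ m - (307 : ℤ) ^ n := by
  have : (((122 : ℤ) ^ m - (307 : ℤ) ^ n : ℤ) : ZMod 5) = 0 := by
    push_cast
    have h1 : (122 : ZMod 5) ^ 4 = 1 := by decide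
    have h2 : (307 : ZMod 5) ^ 4 = 1 := by decide
    rw [pow_mod_helper _ h1, pow_mod_helper _ h2, h,
      show (122 : ZMod 5) = 307 by decide]
    ring
  exact (ZMod.intCast_zmod_eq_zero_iff_dvd _ 5).mp this

lemma div13 (m n : ℕ) (h : 4 ∣ m + n) : (13 : ℤ) ∣ (122 : ℤ) ^ m - (307 : ℤ) ^ n := by
  have : (((122 : ℤ) ^ m - (307 : ℤ) ^ n : ℤ) : ZMod 13) = 0 := by
    push_cast
    have key : (122 : ZMod 13) ^ m = (307 : ZMod 13) ^ n := by
      have hb : (122 : ZMod 13) ≠ 0 := by decide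
      have e1 : (122 : ZMod 13) ^ 4 = 1 := by decide
      have e2 : (307 : ZMod 13) * 122 = 1 := by decide
      haveI : Fact (Nat.Prime 13) := ⟨by norm_num⟩
      have hne : (122 : ZMod 13) ^ n ≠ 0 := pow_ne_zero n hb
      apply mul_right_cancel₀ hne
      have h1 : (122 : ZMod 13) ^ m * 122 ^ n = 1 := by
        obtain ⟨k, hk⟩ := h
        rw [← pow_add, hk, pow_mul, e1, one_pow]
      have h2 : (307 : ZMod 13) ^ n * 122 ^ n = 1 := by
        rw [← mul_pow, e2, one_pow]
      rw [h1, h2]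
    rw [key]
    ring
  exact (ZMod.intCast_zmod_eq_zero_iff_dvd _ 13).mp this

/-- For all `m, n ≥ 0`, `gcd(122^m - 307^n, 3·5·11·13) > 1`; indeed `3` divides
`122^m - 307^n` when `m ≡ 0 (mod 2)`, `11` divides it when `n ≡ 0 (mod 2)`, `5`
divides it when `m ≡ n (mod 4)`, and `13` divides it when `m ≡ -n (mod 4)`. -/
theorem covering_example_122_307 :
    ∀ m n : ℕ,
      1 < Int.gcd ((122 : ℤ) ^ m - (307 : ℤ) ^ n) (3 * 5 * 11 * 13) ∧
      (2 ∣ m → (3 : ℤ) ∣ (122 : ℤ) ^ m - (307 : ℤ) ^ n) ∧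
      (2 ∣ n → (11 : ℤ) ∣ (122 : ℤ) ^ m - (307 : ℤ) ^ n) ∧
      (m ≡ n [MOD 4] → (5 : ℤ) ∣ (122 : ℤ) ^ m - (307 : ℤ) ^ n) ∧
      (4 ∣ m + n → (13 : ℤ) ∣ (122 : ℤ) ^ m - (307 : ℤ) ^ n) := by
  intro m n
  refine ⟨?_, div3 m n, div11 m n, div5 m n, div13 m n⟩
  have hN : ((3 * 5 * 11 * 13 : ℤ)) ≠ 0 := by norm_num
  by_cases hm : 2 ∣ m
  · exact gcd_gt_one 3 (by norm_num) _ _ hN (div3 m n hm) (by norm_num)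
  by_cases hn : 2 ∣ n
  · exact gcd_gt_one 11 (by norm_num) _ _ hN (div11 m n hn) (by norm_num)
  by_cases h5 : m % 4 = n % 4
  · exact gcd_gt_one 5 (by norm_num) _ _ hN (div5 m n h5) (by norm_num)
  · have h13 : 4 ∣ m + n := by omega
    exact gcd_gt_one 13 (by norm_num) _ _ hN (div13 m n h13) (by norm_num)
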